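/- For a finite group G acting on a finite set X, χ^(k)(X,G) equals (1/|G|) · Σ_{g ∈ G} χ^(k-1)(X^{⟨g⟩}, C_G(g)) · |G|/|C_G(g)| summed over conjugacy class representatives; equivalently, the two definitions of the higher order Euler characteristic agree: (1/|G|) Σ_{pairwise commuting (g₀,...,g_k)} |X^{⟨g₀,...,g_k⟩}| = Σ_{[g] ∈ Conj(G)} χ^(k-1)(X^{⟨g⟩}, C_G(g)). -/

import Mathlib

open MulAction

/-- The number of orbits of a group action. -/
noncomputable def numOrbits (G : Type*) [Group G] (X : Type*) [MulAction G X] : ℕ :=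
  Nat.card (Quotient (orbitRel G X))

/-- `(1/|G|) · Σ_{(g₀,…,g_k) pairwise commuting} |X^{⟨g₀,…,g_k⟩}|`. -/
noncomputable def chiT (k : ℕ) (G : Type*) [Group G] (X : Type*) [MulAction G X] : ℚ :=
  (Nat.card {p : (Fin (k + 1) → G) × X //
      (∀ i j, Commute (p.1 i) (p.1 j)) ∧ ∀ i, p.1 i • p.2 = p.2} : ℚ) / (Nat.card G : ℚ)

/-- The higher order Euler characteristic: `χ⁰(X,G) = |X/G|`, and for `k ≥ 1` it is given by
the commuting-tuples formula. -/
noncomputable def chi (k : ℕ) (G : Type*) [Group G] (X : Type*) [MulAction G X] : ℚ :=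
  match k with
  | 0 => (numOrbits G X : ℚ)
  | _ + 1 => chiT k G X

/-- The centralizer of `g` acts on the fixed-point set of `g`. -/
instance fixAction (G : Type*) [Group G] (X : Type*) [MulAction G X] (g : G) :
    MulAction (Subgroup.centralizer ({g} : Set G)) {x : X // g • x = x} where
  smul c x := ⟨(c : G) • (x : X), by
    have h : g * (c : G) = (c : G) • g :=
      Subgroup.mem_centralizer_iff.mp c.2 g (Set.mem_singleton g)
    rw [← mul_smul, h, smul_eq_mul, mul_smul, x.2]⟩
  one_smul x := Subtype.ext (one_smul G x.1)
  mul_smul a b x := Subtype.ext (mul_smul (a : G) (b : G) x.1)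

@[simp] lemma fixAction_smul_coe {G : Type*} [Group G] {X : Type*} [MulAction G X] {g : G}
    (c : Subgroup.centralizer ({g} : Set G)) (x : {x : X // g • x = x}) :
    ((c • x : {x : X // g • x = x}) : X) = (c : G) • (x : X) := rfl

/-- transport of chiT along an equivariant pair of equivalences -/
lemma chiT_congr {G G' : Type*} [Group G] [Group G'] {X X' : Type*} [MulAction G X]
    [MulAction G' X'] (e : G ≃* G') (f : X ≃ X')
    (hf : ∀ (g : G) (x : X), f (g • x) = e g • f x) (k : ℕ) :
    chiT k G X = chiT k G' X' := by
  unfold chiT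
  have h1 : Nat.card G = Nat.card G' := Nat.card_congr e.toEquiv
  have h2 : Nat.card {p : (Fin (k + 1) → G) × X //
      (∀ i j, Commute (p.1 i) (p.1 j)) ∧ ∀ i, p.1 i • p.2 = p.2} =
      Nat.card {p : (Fin (k + 1) → G') × X' //
      (∀ i j, Commute (p.1 i) (p.1 j)) ∧ ∀ i, p.1 i • p.2 = p.2} := by
    apply Nat.card_congr
    refine Equiv.subtypeEquiv
      (Equiv.prodCongr ((Equiv.refl (Fin (k + 1))).arrowCongr e.toEquiv) f) ?_
    rintro ⟨t, x⟩
    simp only [Equiv.prodCongr_apply, Equiv.arrowCongr_apply, Prod.map_fst, Prod.map_snd,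
      Function.comp_apply, Equiv.refl_symm, Equiv.refl_apply, MulEquiv.toEquiv_eq_coe, MulEquiv.coe_toEquiv]
    constructor
    · rintro ⟨hc, hx⟩
      refine ⟨fun i j => (hc i j).map e.toMonoidHom, fun i => ?_⟩
      rw [← hf, hx]
    · rintro ⟨hc, hx⟩
      constructor
      · intro i j
        have := hc i j
        unfold Commute SemiconjBy at this ⊢
        rwa [← map_mul, ← map_mul, e.injective.eq_iff] at this
      · intro i
        have := hx i
        rw [← hf] at this
        exact f.injective this
  rw [h1, h2]

/-- Conjugation equivalence of centralizers. -/
noncomputable def conjCentEquiv {G : Type*} [Group G] (a g : G) :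
    Subgroup.centralizer ({g} : Set G) ≃* Subgroup.centralizer ({a * g * a⁻¹} : Set G) where
  toFun h := ⟨a * (h : G) * a⁻¹, by
    rw [Subgroup.mem_centralizer_singleton_iff]
    have hh : (h : G) * g = g * (h : G) := Subgroup.mem_centralizer_singleton_iff.mp h.2
    have key : ∀ u v : G, (a * u * a⁻¹) * (a * v * a⁻¹) = a * (u * v) * a⁻¹ := by
      intro u v; group
    rw [key, key, hh]⟩
  invFun h := ⟨a⁻¹ * (h : G) * a, by
    rw [Subgroup.mem_centralizer_singleton_iff]
    have hh : (h : G) * (a * g * a⁻¹) = (a * g * a⁻¹) * (h : G) :=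
      Subgroup.mem_centralizer_singleton_iff.mp h.2
    have : a⁻¹ * ((h : G) * (a * g * a⁻¹)) * a = a⁻¹ * ((a * g * a⁻¹) * (h : G)) * a := by
      rw [hh]
    calc (a⁻¹ * (h : G) * a) * g = a⁻¹ * ((h : G) * (a * g * a⁻¹)) * a := by group
    _ = a⁻¹ * ((a * g * a⁻¹) * (h : G)) * a := this
    _ = g * (a⁻¹ * (h : G) * a) := by group⟩
  left_inv h := by ext; simp; group
  right_inv h := by ext; simp; group
  map_mul' h₁ h₂ := by ext; simp [Subgroup.coe_mul]

/-- Conjugation equivalence of fixed-point sets. -/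
noncomputable def conjFixEquiv {G : Type*} [Group G] {X : Type*} [MulAction G X] (a g : G) :
    {x : X // g • x = x} ≃ {x : X // (a * g * a⁻¹) • x = x} where
  toFun x := ⟨a • (x : X), by rw [mul_smul, mul_smul, inv_smul_smul, x.2]⟩
  invFun y := ⟨a⁻¹ • (y : X), by
    have hy : a • g • a⁻¹ • (y : X) = (y : X) := by
      have := y.2; rwa [mul_smul, mul_smul] at this
    calc g • a⁻¹ • (y : X) = a⁻¹ • (a • g • a⁻¹ • (y : X)) := (inv_smul_smul a _).symm
    _ = a⁻¹ • (y : X) := by rw [hy]⟩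
  left_inv x := by ext; simp
  right_inv y := by ext; simp

lemma chiT_isConj {G : Type*} [Group G] {X : Type*} [MulAction G X] {g g' : G}
    (h : IsConj g g') (k : ℕ) :
    chiT k (Subgroup.centralizer ({g} : Set G)) {x : X // g • x = x} =
      chiT k (Subgroup.centralizer ({g'} : Set G)) {x : X // g' • x = x} := by
  obtain ⟨a, ha⟩ := isConj_iff.mp h
  have hg' : g' = a * g * a⁻¹ := ha.symm
  subst hg'
  exact chiT_congr (conjCentEquiv a g) (conjFixEquiv a g)
    (fun c x => by ext; simp [conjCentEquiv, conjFixEquiv, mul_smul]) k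

lemma card_centralizer_isConj {G : Type*} [Group G] {g g' : G} (h : IsConj g g') :
    Nat.card (Subgroup.centralizer ({g} : Set G)) =
      Nat.card (Subgroup.centralizer ({g'} : Set G)) := by
  obtain ⟨a, ha⟩ := isConj_iff.mp h
  have hg' : g' = a * g * a⁻¹ := ha.symm
  subst hg'
  exact Nat.card_congr (conjCentEquiv a g).toEquiv

lemma chiT_zero (G : Type*) [Group G] [Finite G] (X : Type*) [MulAction G X] [Finite X] :
    chiT 0 G X = (numOrbits G X : ℚ) := by
  classical
  letI := Fintype.ofFinite G
  letI := Fintype.ofFinite X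
  unfold chiT numOrbits
  have e : {p : (Fin 1 → G) × X //
      (∀ i j, Commute (p.1 i) (p.1 j)) ∧ ∀ i, p.1 i • p.2 = p.2} ≃ Σ g : G, fixedBy X g := {
    toFun := fun p => ⟨p.1.1 0, p.1.2, p.2.2 0⟩
    invFun := fun q => ⟨(fun _ => q.1, q.2.1), fun i j => by
      have : ∀ i : Fin 1, i = 0 := fun i => Subsingleton.elim i 0
      rw [this i, this j], fun i => by
      have : ∀ i : Fin 1, i = 0 := fun i => Subsingleton.elim i 0
      rw [this i]; exact q.2.2⟩
    left_inv := fun p => by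
      ext i
      · exact congrArg p.1.1 (Subsingleton.elim 0 i)
      · rfl
    right_inv := fun q => rfl }
  rw [Nat.card_congr e, Nat.card_eq_fintype_card, Fintype.card_sigma,
    MulAction.sum_card_fixedBy_eq_card_orbits_mul_card_group]
  rw [Nat.card_eq_fintype_card (α := G), Nat.card_eq_fintype_card]
  push_cast
  rw [mul_div_assoc, div_self, mul_one]
  exact_mod_cast Fintype.card_ne_zero

/-- Decomposition of commuting `(k+2)`-tuples with a fixed point according to the first entry. -/
noncomputable def tupleSigmaEquiv (k : ℕ) (G : Type*) [Group G] (X : Type*) [MulAction G X] :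
    {p : (Fin (k + 2) → G) × X //
        (∀ i j, Commute (p.1 i) (p.1 j)) ∧ ∀ i, p.1 i • p.2 = p.2} ≃
      Σ g : G, {q : (Fin (k + 1) → Subgroup.centralizer ({g} : Set G)) × {x : X // g • x = x} //
        (∀ i j, Commute (q.1 i) (q.1 j)) ∧ ∀ i, q.1 i • q.2 = q.2} where
  toFun p := ⟨p.1.1 0,
    ⟨(fun i => ⟨p.1.1 i.succ, Subgroup.mem_centralizer_singleton_iff.mpr
        (p.2.1 i.succ 0)⟩, ⟨p.1.2, p.2.2 0⟩),
      fun i j => Subtype.ext (p.2.1 i.succ j.succ),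
      fun i => Subtype.ext (p.2.2 i.succ)⟩⟩
  invFun q :=
    match q with
    | ⟨g, ⟨⟨s, x⟩, hc, hx⟩⟩ => ⟨((Fin.cons g (fun i => (s i : G)) : Fin (k + 2) → G), (x : X)), by
      have hall : ∀ i, Commute g ((Fin.cons g (fun i => (s i : G)) : Fin (k + 2) → G) i) := by
        intro i
        refine Fin.cases ?_ ?_ i
        · rw [Fin.cons_zero]
        · intro j
          rw [Fin.cons_succ]
          exact (Subgroup.mem_centralizer_singleton_iff.mp (s j).2).symm
      refine ⟨fun i j => ?_, fun i => ?_⟩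
      · refine Fin.cases ?_ ?_ i
        · simpa using hall j
        · intro i'
          refine Fin.cases ?_ ?_ j
          · simpa using (hall i'.succ).symm
          · intro j'
            simpa [Commute, SemiconjBy] using congrArg Subtype.val (hc i' j')
      · refine Fin.cases ?_ ?_ i
        · simpa using x.2
        · intro i'
          simpa using congrArg Subtype.val (hx i')⟩
  left_inv p := by
    apply Subtype.ext
    apply Prod.ext
    · exact Fin.cons_self_tail p.1.1
    · rfl
  right_inv q := by
    obtain ⟨g, ⟨⟨s, x⟩, hc, hx⟩⟩ := q
    rfl

lemma card_fiber_mul_card_centralizer (G : Type*) [Group G] [Finite G] (c : ConjClasses G) :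
    Nat.card {g : G // ConjClasses.mk g = c} *
      Nat.card (Subgroup.centralizer ({Quotient.out c} : Set G)) = Nat.card G := by
  classical
  letI := Fintype.ofFinite G
  set g := Quotient.out c with hg
  have hc : ConjClasses.mk g = c := c.out_eq
  have e1 : {g' : G // ConjClasses.mk g' = c} ≃ orbit (ConjAct G) g :=
    Equiv.subtypeEquiv (Equiv.refl G) (fun x => by
      rw [ConjAct.orbit_eq_carrier_conjClasses, ConjClasses.mem_carrier_iff_mk_eq, hc,
        Equiv.refl_apply])
  have e2 : Subgroup.centralizer ({g} : Set G) ≃ stabilizer (ConjAct G) g := {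
    toFun := fun x => ⟨ConjAct.toConjAct (x : G), by
      have hx : (x : G) * g = g * (x : G) := Subgroup.mem_centralizer_singleton_iff.mp x.2
      refine mem_stabilizer_iff.mpr ?_
      rw [ConjAct.toConjAct_smul, hx, mul_inv_cancel_right]⟩
    invFun := fun y => ⟨ConjAct.ofConjAct (y : ConjAct G), by
      have hy : ConjAct.ofConjAct (y : ConjAct G) * g *
          (ConjAct.ofConjAct (y : ConjAct G))⁻¹ = g := by
        have h := mem_stabilizer_iff.mp y.2
        rwa [ConjAct.smul_def] at h
      have h2 := congrArg (fun z => z * ConjAct.ofConjAct (y : ConjAct G)) hy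
      simp only [inv_mul_cancel_right] at h2
      exact Subgroup.mem_centralizer_singleton_iff.mpr h2⟩
    left_inv := fun x => Subtype.ext (ConjAct.ofConjAct_toConjAct _)
    right_inv := fun y => Subtype.ext (ConjAct.toConjAct_ofConjAct _) }
  rw [Nat.card_congr e1, Nat.card_congr e2, Nat.card_eq_fintype_card, Nat.card_eq_fintype_card,
    Nat.card_eq_fintype_card]
  exact MulAction.card_orbit_mul_card_stabilizer_eq_card_group (ConjAct G) g

lemma chiT_succ (k : ℕ) (G : Type*) [Group G] [Finite G] (X : Type*) [MulAction G X]
    [Finite X] :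
    chiT (k + 1) G X = ∑ᶠ c : ConjClasses G,
      chiT k (Subgroup.centralizer ({Quotient.out c} : Set G))
        {x : X // Quotient.out c • x = x} := by
  classical
  letI := Fintype.ofFinite G
  letI := Fintype.ofFinite X
  letI : Fintype (ConjClasses G) := Fintype.ofFinite _
  rw [finsum_eq_sum_of_fintype]
  set F : G → ℚ := fun g =>
    chiT k (Subgroup.centralizer ({g} : Set G)) {x : X // g • x = x} with hF
  set N : G → ℚ := fun g => (Nat.card (Subgroup.centralizer ({g} : Set G)) : ℚ) with hN
  have hGpos : (0 : ℚ) < (Nat.card G : ℚ) := by exact_mod_cast Nat.card_pos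
  have h2 : ∀ g : G, (Nat.card
      {q : (Fin (k + 1) → Subgroup.centralizer ({g} : Set G)) × {x : X // g • x = x} //
        (∀ i j, Commute (q.1 i) (q.1 j)) ∧ ∀ i, q.1 i • q.2 = q.2} : ℚ) = N g * F g := by
    intro g
    simp only [hF, hN]
    unfold chiT
    rw [mul_comm, div_mul_cancel₀]
    exact_mod_cast Nat.card_pos.ne'
  have h1 : chiT (k + 1) G X = (∑ g : G, N g * F g) / (Nat.card G : ℚ) := by
    unfold chiT
    rw [Nat.card_congr (tupleSigmaEquiv k G X), Nat.card_eq_fintype_card, Fintype.card_sigma]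
    push_cast
    congr 1
    refine Finset.sum_congr rfl (fun g _ => ?_)
    rw [← h2 g, Nat.card_eq_fintype_card]
  rw [h1]
  have h3 : ∀ g : G, N g * F g =
      N (Quotient.out (ConjClasses.mk g)) * F (Quotient.out (ConjClasses.mk g)) := by
    intro g
    have hconj : IsConj g (Quotient.out (ConjClasses.mk g)) := by
      have hq : ConjClasses.mk (Quotient.out (ConjClasses.mk g)) = ConjClasses.mk g :=
        (ConjClasses.mk g).out_eq
      exact ConjClasses.mk_eq_mk_iff_isConj.mp hq.symm
    rw [hF, hN]
    simp only
    rw [chiT_isConj hconj k, card_centralizer_isConj hconj]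
  calc (∑ g : G, N g * F g) / (Nat.card G : ℚ)
      = (∑ c : ConjClasses G, ∑ g : {g : G // ConjClasses.mk g = c}, N g.1 * F g.1) /
        (Nat.card G : ℚ) := by
          congr 1
          exact (Fintype.sum_fiberwise (fun g => ConjClasses.mk g) (fun g => N g * F g)).symm
    _ = (∑ c : ConjClasses G, (Nat.card {g : G // ConjClasses.mk g = c} : ℚ) *
          (N (Quotient.out c) * F (Quotient.out c))) / (Nat.card G : ℚ) := by
        congr 1
        refine Finset.sum_congr rfl (fun c _ => ?_)
        have : ∀ g : {g : G // ConjClasses.mk g = c}, N g.1 * F g.1 =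
            N (Quotient.out c) * F (Quotient.out c) := by
          rintro ⟨g, hg⟩
          simpa [hg] using h3 g
        rw [Finset.sum_congr rfl (fun g _ => this g), Finset.sum_const, Finset.card_univ,
          Nat.card_eq_fintype_card, nsmul_eq_mul]
    _ = ∑ c : ConjClasses G, F (Quotient.out c) := by
        rw [Finset.sum_div]
        refine Finset.sum_congr rfl (fun c _ => ?_)
        simp only [hN]
        have hkey := card_fiber_mul_card_centralizer G c
        have hthis : (Nat.card {g : G // ConjClasses.mk g = c} : ℚ) *
            (Nat.card (Subgroup.centralizer ({Quotient.out c} : Set G)) : ℚ) =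
            (Nat.card G : ℚ) := by exact_mod_cast congrArg (Nat.cast (R := ℚ)) hkey
        rw [← mul_assoc, hthis, mul_comm, mul_div_assoc, div_self hGpos.ne', mul_one]

/-- The recursively defined higher order Euler characteristic:
`χ⁰(X,G) = |X/G|`, `χᵏ(X,G) = Σ_{[g]} χ^{k-1}(X^{⟨g⟩}, C_G(g))`. -/
noncomputable def chiRec : (k : ℕ) → (G : Type) → [inst : Group G] → (X : Type) →
    [inst2 : MulAction G X] → ℚ :=
  Nat.rec (motive := fun _ => (G : Type) → [inst : Group G] → (X : Type) →
      [inst2 : MulAction G X] → ℚ)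
    (fun G _ X _ => (numOrbits G X : ℚ))
    (fun _k ih G _ X _ => ∑ᶠ c : ConjClasses G,
        ih (Subgroup.centralizer ({Quotient.out c} : Set G))
          {x : X // Quotient.out c • x = x})

lemma chiRec_eq_chiT : ∀ (k : ℕ) (G : Type) [Group G] [Finite G] (X : Type) [MulAction G X]
    [Finite X], chiRec k G X = chiT k G X := by
  intro k
  induction k with
  | zero =>
    intro G _ _ X _ _
    exact (chiT_zero G X).symm
  | succ k ih =>
    intro G _ _ X _ _
    show (∑ᶠ c : ConjClasses G, chiRec k (Subgroup.centralizer ({Quotient.out c} : Set G))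
        {x : X // Quotient.out c • x = x}) = chiT (k + 1) G X
    rw [chiT_succ]
    exact finsum_congr (fun c => ih _ _)

theorem tuple_def_eq_recursive_def
    (G : Type) [Group G] [Finite G] (X : Type) [MulAction G X] [Finite X]
    (k : ℕ) (hk : 1 ≤ k) :
    chiT k G X = ∑ᶠ c : ConjClasses G,
      chiRec (k - 1) (Subgroup.centralizer ({Quotient.out c} : Set G))
        {x : X // Quotient.out c • x = x} := by
  obtain ⟨m, rfl⟩ : ∃ m, k = m + 1 := ⟨k - 1, (Nat.succ_pred_eq_of_pos hk).symm⟩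
  simp only [Nat.add_sub_cancel]
  rw [chiT_succ]
  exact finsum_congr (fun c => (chiRec_eq_chiT m _ _).symm)
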